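/- Let H = F_2^n with n ≥ 1, and let X ⊆ H. Then there is a partition of H into two affine subspaces H' and H'' (each of codimension 1) such that (1/2)( P(X|H')² + P(X|H'')² ) ≥ P(X|H)² + (1/8)‖X‖_Uni². -/

import Mathlib

open Finset

noncomputable section

/-- The group `F_2^n`. -/
abbrev H (n : ℕ) : Type := Fin n → ZMod 2

/-- The character `x ↦ (-1)^{x·ξ}`. -/
def chr {n : ℕ} (x ξ : H n) : ℝ := (-1 : ℝ) ^ ((∑ i, x i * ξ i).val)

/-- Indicator function of a finite subset of `F_2^n`. -/
def ind {n : ℕ} (X : Finset (H n)) (x : H n) : ℝ := if x ∈ X then 1 else 0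

/-- Fourier transform on `F_2^n`. -/
def fhat {n : ℕ} (f : H n → ℝ) (ξ : H n) : ℝ := ∑ x, f x * chr x ξ

/-- Density of `X` in `F_2^n`. -/
def density {n : ℕ} (X : Finset (H n)) : ℝ := (X.card : ℝ) / (Fintype.card (H n) : ℝ)

/-- Average of `f` over `F_2^n`. -/
def havg {n : ℕ} (f : H n → ℝ) : ℝ := (∑ x, f x) / (Fintype.card (H n) : ℝ)

/-- Uniformity norm: the largest normalized nonzero Fourier coefficient. -/
def uniNorm {n : ℕ} (X : Finset (H n)) : ℝ :=
  ⨆ ξ : {ξ : H n // ξ ≠ 0}, |fhat (ind X) ξ.1| / (Fintype.card (H n) : ℝ)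
lemma chr_eq {n : ℕ} (x ξ : H n) :
    chr x ξ = if (∑ i, x i * ξ i) = 0 then 1 else -1 := by
  unfold chr
  generalize (∑ i, x i * ξ i) = a
  fin_cases a <;> simp [ZMod.val]
  · exact fun h => absurd rfl h
  · exact fun h => absurd h one_ne_zero

lemma sum_chr_eq_zero {n : ℕ} {ξ : H n} (hξ : ξ ≠ 0) :
    ∑ x, chr x ξ = 0 := by
  obtain ⟨i, hi⟩ : ∃ i, ξ i ≠ 0 := by
    by_contra h
    push_neg at h
    exact hξ (funext h)
  have hi1 : ξ i = 1 := by
    revert hi; generalize ξ i = a; fin_cases a <;> simp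
    · exact fun h => absurd rfl h
    · exact fun _ => rfl
  set e : H n := fun j => if j = i then 1 else 0 with he
  have key : ∀ x : H n, chr (x + e) ξ = - chr x ξ := by
    intro x
    have hsum : (∑ j, (x + e) j * ξ j) = (∑ j, x j * ξ j) + 1 := by
      have : ∀ j, (x + e) j * ξ j = x j * ξ j + (if j = i then ξ j else 0) := by
        intro j
        simp only [Pi.add_apply, he]
        by_cases h : j = i <;> simp [h] <;> ring
      rw [Finset.sum_congr rfl (fun j _ => this j), Finset.sum_add_distrib,
        Finset.sum_ite_eq' univ i ξ]
      simp [hi1]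
    rw [chr_eq, chr_eq, hsum]
    generalize (∑ j, x j * ξ j) = a
    fin_cases a <;> norm_num <;> split_ifs <;> norm_num
    · rename_i h1 _; exact absurd h1 one_ne_zero
    · rename_i _ h2; exact h2 rfl
    · rename_i _ h2; exact one_ne_zero h2
    · rename_i h1 _; exact h1 rfl
  have hbij : ∑ x : H n, chr (x + e) ξ = ∑ x : H n, chr x ξ :=
    Fintype.sum_equiv (Equiv.addRight e) _ _ (fun x => rfl)
  have h2 : ∑ x : H n, chr (x + e) ξ = - ∑ x : H n, chr x ξ := by
    simp [key]
  linarith [hbij, h2]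

lemma fhat_ind_eq {n : ℕ} (X : Finset (H n)) (ξ : H n) :
    fhat (ind X) ξ =
      ((X.filter (fun x => (∑ i, x i * ξ i) = 0)).card : ℝ) -
      ((X.filter (fun x => (∑ i, x i * ξ i) ≠ 0)).card : ℝ) := by
  unfold fhat ind
  simp only [ite_mul, one_mul, zero_mul]
  rw [Finset.sum_ite_mem, Finset.univ_inter]
  rw [Finset.sum_congr rfl (fun x _ => chr_eq x ξ), Finset.sum_ite]
  simp
  ring

lemma sum_chr_split {n : ℕ} (ξ : H n) :
    ∑ x : H n, chr x ξ =
      (((univ : Finset (H n)).filter (fun x => (∑ i, x i * ξ i) = 0)).card : ℝ) -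
      (((univ : Finset (H n)).filter (fun x => (∑ i, x i * ξ i) ≠ 0)).card : ℝ) := by
  rw [Finset.sum_congr rfl (fun x _ => chr_eq x ξ), Finset.sum_ite]
  simp
  ring

lemma alg_key (a0 a1 b0 : ℝ) (hb : b0 ≠ 0) :
    (a0 + a1) ^ 2 / (2 * b0) ^ 2 + ((a0 - a1) / (2 * b0)) ^ 2 =
      (1 / 2) * ((a0 / b0) ^ 2 + (a1 / b0) ^ 2) := by
  field_simp
  ring

/-- There is a partition of `F_2^n` into two codimension-one affine subspaces
(the level sets of a nonzero linear functional `ξ`) on which the mean square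
density of `X` increases by `‖X‖_Uni²/8`. -/
theorem stmt_7 {n : ℕ} (hn : 1 ≤ n) (X : Finset (H n)) :
    ∃ ξ : H n, ξ ≠ 0 ∧
      density X ^ 2 + (1 / 8) * uniNorm X ^ 2 ≤
        (1 / 2) *
          ((((X.filter (fun x => (∑ i, x i * ξ i) = 0)).card : ℝ) /
              (((univ : Finset (H n)).filter (fun x => (∑ i, x i * ξ i) = 0)).card : ℝ)) ^ 2 +
           (((X.filter (fun x => (∑ i, x i * ξ i) ≠ 0)).card : ℝ) /
              (((univ : Finset (H n)).filter (fun x => (∑ i, x i * ξ i) ≠ 0)).card : ℝ)) ^ 2) := by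
  have hone : ((fun _ => 1 : H n) : H n) ≠ 0 := by
    intro h
    have := congrFun h ⟨0, hn⟩
    simp at this
  haveI : Nonempty {ξ : H n // ξ ≠ 0} := ⟨⟨fun _ => 1, hone⟩⟩
  obtain ⟨ξ₀, hmax⟩ := Finite.exists_max
    (fun ξ : {ξ : H n // ξ ≠ 0} => |fhat (ind X) ξ.1| / (Fintype.card (H n) : ℝ))
  refine ⟨ξ₀.1, ξ₀.2, ?_⟩
  have hu_le0 : uniNorm X ≤ |fhat (ind X) ξ₀.1| / (Fintype.card (H n) : ℝ) :=
    ciSup_le hmax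
  have hu_nonneg : 0 ≤ uniNorm X := by
    refine le_trans ?_ (le_ciSup (Set.Finite.bddAbove (Set.finite_range _)) ξ₀)
    positivity
  set u : ℝ := uniNorm X with hu
  set N : ℝ := (Fintype.card (H n) : ℝ) with hN
  set a0 : ℝ := ((X.filter (fun x => (∑ i, x i * ξ₀.1 i) = 0)).card : ℝ) with ha0
  set a1 : ℝ := ((X.filter (fun x => (∑ i, x i * ξ₀.1 i) ≠ 0)).card : ℝ) with ha1
  set b0 : ℝ := (((univ : Finset (H n)).filter (fun x => (∑ i, x i * ξ₀.1 i) = 0)).card : ℝ) with hb0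
  set b1 : ℝ := (((univ : Finset (H n)).filter (fun x => (∑ i, x i * ξ₀.1 i) ≠ 0)).card : ℝ) with hb1
  have hNpos : (0 : ℝ) < N := by
    rw [hN]; exact_mod_cast Fintype.card_pos
  have hu_le : u ≤ |a0 - a1| / N := by
    rw [hu, hN, ha0, ha1, ← fhat_ind_eq]
    exact hu_le0
  have hb : b0 = b1 := by
    have h0 := sum_chr_eq_zero ξ₀.2
    have h1 := sum_chr_split ξ₀.1
    rw [h0] at h1
    rw [hb0, hb1]
    linarith
  have hNsplit : N = b0 + b1 := by
    have h := Finset.card_filter_add_card_filter_not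
      (s := (univ : Finset (H n))) (p := fun x => (∑ i, x i * ξ₀.1 i) = 0)
    rw [hN, hb0, hb1, ← Finset.card_univ, ← h]
    push_cast
    ring
  have hXsplit : (X.card : ℝ) = a0 + a1 := by
    have h := Finset.card_filter_add_card_filter_not
      (s := X) (p := fun x => (∑ i, x i * ξ₀.1 i) = 0)
    rw [ha0, ha1, ← h]
    push_cast
    ring
  rw [density, ← hN, hXsplit, ← hb]
  clear_value u N a0 a1 b0 b1
  subst hb
  have hb0pos : 0 < b0 := by linarith
  have hN2b : N = 2 * b0 := by linarith
  have hu2 : u ^ 2 ≤ ((a0 - a1) / N) ^ 2 := by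
    have h1 : u ≤ |(a0 - a1) / N| := by
      rw [abs_div, abs_of_pos hNpos]
      exact hu_le
    calc u ^ 2 ≤ |(a0 - a1) / N| ^ 2 := pow_le_pow_left₀ hu_nonneg h1 2
      _ = ((a0 - a1) / N) ^ 2 := sq_abs _
  have key : (a0 + a1) ^ 2 / N ^ 2 + ((a0 - a1) / N) ^ 2 =
      (1 / 2) * ((a0 / b0) ^ 2 + (a1 / b0) ^ 2) := by
    rw [hN2b]
    exact alg_key a0 a1 b0 hb0pos.ne'
  have hstep : ((a0 + a1) / N) ^ 2 + (1 / 8) * u ^ 2 ≤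
      (a0 + a1) ^ 2 / N ^ 2 + ((a0 - a1) / N) ^ 2 := by
    rw [div_pow]
    nlinarith [hu2, sq_nonneg u]
  linarith [hstep, key.le]
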